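/- Let $a, a^+, v_1 \in \mathbb{R}^d$ with $v_1$ a unit vector, and let $V \in \mathbb{R}^{d \times (k-1)}$ have orthonormal columns orthogonal to $v_1$. Suppose $a^+ = G + g$ where $G, g \in \mathrm{span}(v_1, V)$, $\|V^\top G\| \le \frac{1}{2}\tan\theta(a, v_1)\,|v_1^\top G|$, $|v_1^\top g| \le 0.2\,|v_1^\top G|$, and $v_1^\top G \ne 0$. Then $\tan\theta(a^+, v_1) \le \frac{1.25}{2}\tan\theta(a, v_1) + \frac{5}{4}\cdot\frac{\|g\|}{|v_1^\top G|}$, where $\tan\theta(x, v_1) = \|V^\top x\|/|v_1^\top x|$. -/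

import Mathlib

open Finset


lemma sqrt_sum_sq_add_le {n : ℕ} (x y : Fin n → ℝ) :
    Real.sqrt (∑ i, (x i + y i) ^ 2) ≤
      Real.sqrt (∑ i, (x i) ^ 2) + Real.sqrt (∑ i, (y i) ^ 2) := by
  have h := norm_add_le ((WithLp.equiv 2 (Fin n → ℝ)).symm x)
    ((WithLp.equiv 2 (Fin n → ℝ)).symm y)
  simpa [EuclideanSpace.norm_eq, sq_abs, ← WithLp.toLp_add] using h

/-- One step of perturbed power iteration: if `a⁺ = G + g` where `G, g` lie in
the span of `v₁` and the orthonormal family `w`, the cross component of `G` is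
controlled by `½ tanθ(a,v₁)·|v₁ᵀG|`, and `|v₁ᵀg| ≤ 0.2 |v₁ᵀG|`, then
`tanθ(a⁺,v₁) ≤ (1.25/2) tanθ(a,v₁) + (5/4)·‖g‖/|v₁ᵀG|`. -/
theorem perturbed_power_iteration_step {d k : ℕ}
    (v1 : EuclideanSpace ℝ (Fin d)) (hv1 : ‖v1‖ = 1)
    (w : Fin (k - 1) → EuclideanSpace ℝ (Fin d))
    (hw : Orthonormal ℝ w)
    (hwv1 : ∀ i, inner ℝ (w i) v1 = (0 : ℝ))
    (a aplus G g : EuclideanSpace ℝ (Fin d))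
    (hGspan : G ∈ Submodule.span ℝ (insert v1 (Set.range w)))
    (hgspan : g ∈ Submodule.span ℝ (insert v1 (Set.range w)))
    (haplus : aplus = G + g)
    (hGne : (inner ℝ v1 G : ℝ) ≠ 0)
    (hcross : Real.sqrt (∑ i, ((inner ℝ (w i) G : ℝ)) ^ 2) ≤
      (1 / 2) * (Real.sqrt (∑ i, ((inner ℝ (w i) a : ℝ)) ^ 2) / |(inner ℝ v1 a : ℝ)|) *
        |(inner ℝ v1 G : ℝ)|)
    (hg : |(inner ℝ v1 g : ℝ)| ≤ 0.2 * |(inner ℝ v1 G : ℝ)|) :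
    Real.sqrt (∑ i, ((inner ℝ (w i) aplus : ℝ)) ^ 2) / |(inner ℝ v1 aplus : ℝ)| ≤
      (1.25 / 2) * (Real.sqrt (∑ i, ((inner ℝ (w i) a : ℝ)) ^ 2) / |(inner ℝ v1 a : ℝ)|) +
        (5 / 4) * (‖g‖ / |(inner ℝ v1 G : ℝ)|) := by

  set T := Real.sqrt (∑ i, ((inner ℝ (w i) a : ℝ)) ^ 2) / |(inner ℝ v1 a : ℝ)| with hT
  have hTnn : 0 ≤ T := div_nonneg (Real.sqrt_nonneg _) (abs_nonneg _)
  have hc : 0 < |(inner ℝ v1 G : ℝ)| := abs_pos.mpr hGne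
  -- denominator bound
  have hinner : (inner ℝ v1 aplus : ℝ) = (inner ℝ v1 G : ℝ) + (inner ℝ v1 g : ℝ) := by
    rw [haplus, inner_add_right]
  have hD : 0.8 * |(inner ℝ v1 G : ℝ)| ≤ |(inner ℝ v1 aplus : ℝ)| := by
    have h1 : |(inner ℝ v1 G : ℝ)| - |(inner ℝ v1 g : ℝ)| ≤ |(inner ℝ v1 aplus : ℝ)| := by
      rw [hinner]
      have := abs_add_le ((inner ℝ v1 G : ℝ) + (inner ℝ v1 g : ℝ)) (-(inner ℝ v1 g : ℝ))
      simp only [add_neg_cancel_right, abs_neg] at this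
      linarith
    linarith
  -- Bessel
  have hBessel : Real.sqrt (∑ i, ((inner ℝ (w i) g : ℝ)) ^ 2) ≤ ‖g‖ := by
    have h := hw.sum_inner_products_le (s := Finset.univ) g
    have h' : ∑ i, ((inner ℝ (w i) g : ℝ)) ^ 2 ≤ ‖g‖ ^ 2 := by
      simpa [Real.norm_eq_abs, sq_abs] using h
    calc Real.sqrt (∑ i, ((inner ℝ (w i) g : ℝ)) ^ 2) ≤ Real.sqrt (‖g‖ ^ 2) :=
          Real.sqrt_le_sqrt h'
      _ = ‖g‖ := Real.sqrt_sq (norm_nonneg _)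
  -- numerator bound
  have hN : Real.sqrt (∑ i, ((inner ℝ (w i) aplus : ℝ)) ^ 2) ≤
      (1 / 2) * T * |(inner ℝ v1 G : ℝ)| + ‖g‖ := by
    have heq : ∀ i, (inner ℝ (w i) aplus : ℝ) = (inner ℝ (w i) G : ℝ) + (inner ℝ (w i) g : ℝ) := by
      intro i; rw [haplus, inner_add_right]
    calc Real.sqrt (∑ i, ((inner ℝ (w i) aplus : ℝ)) ^ 2)
        = Real.sqrt (∑ i, ((inner ℝ (w i) G : ℝ) + (inner ℝ (w i) g : ℝ)) ^ 2) := by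
          simp_rw [heq]
      _ ≤ Real.sqrt (∑ i, ((inner ℝ (w i) G : ℝ)) ^ 2) +
            Real.sqrt (∑ i, ((inner ℝ (w i) g : ℝ)) ^ 2) := sqrt_sum_sq_add_le _ _
      _ ≤ (1 / 2) * T * |(inner ℝ v1 G : ℝ)| + ‖g‖ := add_le_add hcross hBessel
  have hNnn : 0 ≤ (1 / 2) * T * |(inner ℝ v1 G : ℝ)| + ‖g‖ := by positivity
  have hpos : 0 < 0.8 * |(inner ℝ v1 G : ℝ)| := by positivity
  have key : Real.sqrt (∑ i, ((inner ℝ (w i) aplus : ℝ)) ^ 2) / |(inner ℝ v1 aplus : ℝ)| ≤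
      ((1 / 2) * T * |(inner ℝ v1 G : ℝ)| + ‖g‖) / (0.8 * |(inner ℝ v1 G : ℝ)|) :=
    div_le_div₀ hNnn hN hpos hD
  have hfin : ((1 / 2) * T * |(inner ℝ v1 G : ℝ)| + ‖g‖) / (0.8 * |(inner ℝ v1 G : ℝ)|) =
      (1.25 / 2) * T + (5 / 4) * (‖g‖ / |(inner ℝ v1 G : ℝ)|) := by
    have : ∀ c t u : ℝ, c ≠ 0 → ((1 / 2) * t * c + u) / (0.8 * c) =
        (1.25 / 2) * t + (5 / 4) * (u / c) := by
      intro c t u hcne; field_simp; ring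
    exact this _ _ _ hc.ne' 
  linarith [key, hfin.le, hfin.ge]
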